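/- Let n, m ≥ 1, let H be a Hermitian complex matrix indexed by Fin n × Fin m, let f : ℝ → ℝ be a continuous convex function, and let a be an n×n complex matrix with Tr(a* a) = 1. Then the matrix K := Tr₁((a* ⊗ 1) H (a ⊗ 1)) is Hermitian, and Tr f(K) ≤ Tr(a* · (Tr₂ f(H)) · a). -/

import Mathlib

open Matrix
open scoped ComplexOrder

/-- The partial trace over the first factor: `(Tr₁ X)_{j,l} = ∑ᵢ X_{(i,j),(i,l)}`. -/
noncomputable def ptrace1 {n m : ℕ} (X : Matrix (Fin n × Fin m) (Fin n × Fin m) ℂ) :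
    Matrix (Fin m) (Fin m) ℂ :=
  Matrix.of fun j l => ∑ i : Fin n, X (i, j) (i, l)

/-- The partial trace over the second factor: `(Tr₂ X)_{i,k} = ∑ⱼ X_{(i,j),(k,j)}`. -/
noncomputable def ptrace2 {n m : ℕ} (X : Matrix (Fin n × Fin m) (Fin n × Fin m) ℂ) :
    Matrix (Fin n) (Fin n) ℂ :=
  Matrix.of fun i k => ∑ j : Fin m, X (i, j) (k, j)

/-- `a ⊗ 1`, with entries `(a ⊗ 1)_{(i,j),(k,l)} = a_{i,k} δ_{j,l}`. -/
def tensorOne {n m : ℕ} (a : Matrix (Fin n) (Fin n) ℂ) :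
    Matrix (Fin n × Fin m) (Fin n × Fin m) ℂ :=
  Matrix.of fun p q => a p.1 q.1 * (if p.2 = q.2 then 1 else 0)

/-- `g` applied to a Hermitian matrix via the functional calculus
(`g(A) = ∑ᵢ g(λᵢ) Pᵢ` for the spectral decomposition `A = ∑ᵢ λᵢ Pᵢ`). -/
noncomputable def matFun {k : Type*} [Fintype k] [DecidableEq k]
    {A : Matrix k k ℂ} (hA : A.IsHermitian) (g : ℝ → ℝ) : Matrix k k ℂ := hA.cfc g

set_option linter.unusedSectionVars false

section aux
variable {α β ι κ : Type*} [Fintype α] [DecidableEq α] [Fintype β] [DecidableEq β]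
  [Fintype ι] [DecidableEq ι] [Fintype κ] [DecidableEq κ]

/-- general `X ⊗ 1`. -/
def tOne (β : Type*) [Fintype β] [DecidableEq β] (X : Matrix α α ℂ) : Matrix (α × β) (α × β) ℂ :=
  Matrix.of fun p q => X p.1 q.1 * (if p.2 = q.2 then 1 else 0)

lemma tOne_mul (X Y : Matrix α α ℂ) : (tOne β X) * tOne β Y = tOne β (X * Y) := by
  ext p q
  simp only [tOne, Matrix.mul_apply, Matrix.of_apply, Fintype.sum_prod_type]
  rw [Finset.sum_mul]
  refine Finset.sum_congr rfl fun c _ => ?_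
  simp [mul_ite, ite_mul, mul_assoc, Finset.sum_ite_eq]

lemma tOne_one : tOne (α := α) β (1 : Matrix α α ℂ) = 1 := by
  ext p q
  simp only [tOne, Matrix.one_apply, Prod.ext_iff, ite_and, Matrix.of_apply, ite_mul, one_mul,
    zero_mul, mul_ite, mul_one, mul_zero]
  by_cases h1 : p.1 = q.1 <;> by_cases h2 : p.2 = q.2 <;> simp [h1, h2]

lemma tOne_conjTranspose (X : Matrix α α ℂ) : (tOne β X)ᴴ = tOne β Xᴴ := by
  ext p q
  simp [tOne, Matrix.conjTranspose_apply, eq_comm, apply_ite (star : ℂ → ℂ)]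

lemma tOne_diagonal (d : α → ℂ) :
    tOne β (Matrix.diagonal d) = Matrix.diagonal (fun p : α × β => d p.1) := by
  ext p q
  simp only [tOne, Matrix.of_apply, Matrix.diagonal_apply]
  by_cases h1 : p.1 = q.1 <;> by_cases h2 : p.2 = q.2 <;>
    simp [h1, h2, Prod.ext_iff]

lemma triple_diag_entry (M : Matrix ι κ ℂ) (d : ι → ℂ) (i k : κ) :
    (Mᴴ * Matrix.diagonal d * M) i k = ∑ P, star (M P i) * d P * M P k := by
  rw [Matrix.mul_assoc]
  simp only [Matrix.mul_apply, Matrix.conjTranspose_apply, Matrix.diagonal_apply, ite_mul,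
    zero_mul, Finset.sum_ite_eq, Finset.mem_univ, if_true, mul_assoc]

end aux

/-- **Jensen's inequality for partial traces (normalized case).**
For `n, m ≥ 1`, a Hermitian `H` on `ℂⁿ ⊗ ℂᵐ`, a continuous convex `f : ℝ → ℝ` and an `n×n`
matrix `a` with `Tr(a* a) = 1`, the matrix `K = Tr₁((a* ⊗ 1) H (a ⊗ 1))` is Hermitian and
`Tr f(K) ≤ Tr(a* · (Tr₂ f(H)) · a)`. -/
theorem trace_jensen_partial_trace {n m : ℕ} (hn : 1 ≤ n) (hm : 1 ≤ m)
    {H : Matrix (Fin n × Fin m) (Fin n × Fin m) ℂ} (hH : H.IsHermitian)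
    (f : ℝ → ℝ) (hf : Continuous f) (hconv : ConvexOn ℝ Set.univ f)
    (a : Matrix (Fin n) (Fin n) ℂ) (ha : (aᴴ * a).trace = 1) :
    ∃ hK : (ptrace1 (tensorOne aᴴ * H * tensorOne a)).IsHermitian,
      (matFun hK f).trace ≤ (aᴴ * ptrace2 (matFun hH f) * a).trace := by
  classical
  have htens : (tensorOne (m := m) a)ᴴ = tensorOne aᴴ := by
    ext p q
    simp [tensorOne, Matrix.conjTranspose_apply, eq_comm, apply_ite (star : ℂ → ℂ)]
  have hM : (tensorOne aᴴ * H * tensorOne a).IsHermitian := by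
    rw [← htens]; exact Matrix.isHermitian_conjTranspose_mul_mul _ hH
  have hK : (ptrace1 (tensorOne aᴴ * H * tensorOne a)).IsHermitian := by
    unfold Matrix.IsHermitian at hM ⊢
    ext j l
    simp only [Matrix.conjTranspose_apply, ptrace1, Matrix.of_apply, star_sum]
    refine Finset.sum_congr rfl fun i _ => ?_
    conv_rhs => rw [← hM]
    simp [Matrix.conjTranspose_apply]
  refine ⟨hK, ?_⟩
  set U : Matrix (Fin n × Fin m) (Fin n × Fin m) ℂ := (hH.eigenvectorUnitary : Matrix (Fin n × Fin m) (Fin n × Fin m) ℂ) with hU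
  set V : Matrix (Fin m) (Fin m) ℂ := (hK.eigenvectorUnitary : Matrix (Fin m) (Fin m) ℂ) with hV
  set lam := hH.eigenvalues with hlam
  set mu := hK.eigenvalues with hmudef
  set W : Matrix ((Fin n × Fin m) × Fin n) (Fin m) ℂ :=
    Matrix.of (fun P l => a P.1.1 P.2 * (if P.1.2 = l then 1 else 0)) with hW
  have hUU : U * star U = 1 := Matrix.mem_unitaryGroup_iff.mp hH.eigenvectorUnitary.2
  have hVV : V * star V = 1 := Matrix.mem_unitaryGroup_iff.mp hK.eigenvectorUnitary.2
  have hVV' : star V * V = 1 := Matrix.mem_unitaryGroup_iff'.mp hK.eigenvectorUnitary.2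
  have ha' : ∑ i : Fin n, ∑ k : Fin n, star (a k i) * a k i = (1 : ℂ) := by
    simpa [Matrix.trace, Matrix.mul_apply, Matrix.conjTranspose_apply, Matrix.diag] using ha
  have hWW : Wᴴ * W = 1 := by
    ext l l'
    rw [Matrix.mul_apply]
    calc ∑ P : (Fin n × Fin m) × Fin n, Wᴴ l P * W P l'
        = ∑ q : Fin n × Fin m, ∑ i : Fin n,
            (star (a q.1 i) * a q.1 i) * ((if q.2 = l then 1 else 0) * (if q.2 = l' then 1 else 0)) := by
          rw [Fintype.sum_prod_type]
          refine Finset.sum_congr rfl fun q _ => Finset.sum_congr rfl fun i _ => ?_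
          simp only [hW, Matrix.conjTranspose_apply, Matrix.of_apply, star_mul',
            apply_ite (star : ℂ → ℂ), star_one, star_zero]
          ring
      _ = (if l = l' then 1 else 0) := by
          rw [Fintype.sum_prod_type]
          rw [Finset.sum_comm]
          calc ∑ j' : Fin m, ∑ k : Fin n, ∑ i : Fin n,
              (star (a k i) * a k i) * ((if j' = l then 1 else 0) * (if j' = l' then 1 else 0))
              = ∑ j' : Fin m, (∑ k : Fin n, ∑ i : Fin n, star (a k i) * a k i) *
                  ((if j' = l then 1 else 0) * (if j' = l' then 1 else 0)) := by
                refine Finset.sum_congr rfl fun j' _ => ?_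
                rw [Finset.sum_mul]
                exact Finset.sum_congr rfl fun k _ => by rw [Finset.sum_mul]
            _ = ∑ j' : Fin m, (if j' = l then 1 else 0) * (if j' = l' then 1 else 0) := by
                have : (∑ k : Fin n, ∑ i : Fin n, star (a k i) * a k i) = 1 := by
                  rw [Finset.sum_comm]; exact ha'
                simp only [Complex.star_def] at this
                simp [this]
            _ = (if l = l' then 1 else 0) := by
                simp [ite_mul, Finset.sum_ite_eq', eq_comm]
      _ = (1 : Matrix (Fin m) (Fin m) ℂ) l l' := by rw [Matrix.one_apply]
  have hWGW : ∀ (G : Matrix (Fin n × Fin m) (Fin n × Fin m) ℂ) (l l' : Fin m),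
      (Wᴴ * tOne (Fin n) G * W) l l'
        = ∑ i : Fin n, ∑ k : Fin n, ∑ k' : Fin n, star (a k i) * G (k, l) (k', l') * a k' i := by
    intro G l l'
    rw [Matrix.mul_assoc, Matrix.mul_apply]
    simp only [Matrix.mul_apply, Matrix.conjTranspose_apply, hW, Matrix.of_apply, tOne,
      star_mul', apply_ite (star : ℂ → ℂ), star_one, star_zero, Fintype.sum_prod_type,
      ite_mul, mul_ite, one_mul, mul_one, zero_mul, mul_zero, Finset.sum_ite_eq,
      Finset.sum_ite_eq', Finset.mem_univ, if_true, Finset.mul_sum, Finset.sum_mul,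
      Finset.sum_ite_irrel, Finset.sum_const_zero]
    rw [Finset.sum_comm]
    exact Finset.sum_congr rfl fun i _ => Finset.sum_congr rfl fun k _ =>
      Finset.sum_congr rfl fun k' _ => by ring
  have hKW : ptrace1 (tensorOne aᴴ * H * tensorOne a) = Wᴴ * tOne (Fin n) H * W := by
    ext l l'
    rw [hWGW H l l']
    simp only [ptrace1, Matrix.of_apply, Matrix.mul_apply, tensorOne, Matrix.conjTranspose_apply,
      star_mul', apply_ite (star : ℂ → ℂ), star_one, star_zero,
      Fintype.sum_prod_type, ite_mul, mul_ite, one_mul, mul_one, zero_mul, mul_zero,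
      Finset.sum_ite_eq, Finset.sum_ite_eq', Finset.mem_univ, if_true, Finset.mul_sum,
      Finset.sum_mul, Finset.sum_ite_irrel, Finset.sum_const_zero]
    exact Finset.sum_congr rfl fun i _ => Finset.sum_comm
  have traceW : ∀ G : Matrix (Fin n × Fin m) (Fin n × Fin m) ℂ,
      (Wᴴ * tOne (Fin n) G * W).trace = (aᴴ * ptrace2 G * a).trace := by
    intro G
    have h1 : (Wᴴ * tOne (Fin n) G * W).trace
        = ∑ l : Fin m, ∑ i : Fin n, ∑ k : Fin n, ∑ k' : Fin n,
            star (a k i) * G (k, l) (k', l) * a k' i := by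
      simp only [Matrix.trace, Matrix.diag]
      exact Finset.sum_congr rfl fun l _ => hWGW G l l
    rw [h1]
    simp only [Matrix.trace, Matrix.diag, Matrix.mul_apply, Matrix.conjTranspose_apply,
      ptrace2, Matrix.of_apply, Finset.mul_sum, Finset.sum_mul]
    rw [Finset.sum_comm]
    refine Finset.sum_congr rfl fun i _ => ?_
    calc ∑ l : Fin m, ∑ k : Fin n, ∑ k' : Fin n, star (a k i) * G (k, l) (k', l) * a k' i
        = ∑ k : Fin n, ∑ l : Fin m, ∑ k' : Fin n, star (a k i) * G (k, l) (k', l) * a k' i :=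
          Finset.sum_comm
      _ = ∑ k : Fin n, ∑ k' : Fin n, ∑ l : Fin m, star (a k i) * G (k, l) (k', l) * a k' i :=
          Finset.sum_congr rfl fun k _ => Finset.sum_comm
      _ = ∑ k' : Fin n, ∑ k : Fin n, ∑ l : Fin m, star (a k i) * G (k, l) (k', l) * a k' i :=
          Finset.sum_comm
  -- fold unitary coercions
  have hs := hK.conjStarAlgAut_star_eigenvectorUnitary
  simp only [Unitary.conjStarAlgAut_apply, Unitary.coe_star, star_star] at hs
  rw [← hV] at hs
  have hspec := hH.spectral_theorem
  simp only [Unitary.conjStarAlgAut_apply, Unitary.coe_star] at hspec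
  rw [← hU] at hspec
  have hHspec : tOne (Fin n) H
      = tOne (Fin n) U * Matrix.diagonal (fun P : (Fin n × Fin m) × Fin n =>
          (RCLike.ofReal ∘ hH.eigenvalues) P.1) * tOne (Fin n) (star U) := by
    conv_lhs => rw [hspec]
    rw [← tOne_mul, ← tOne_mul, tOne_diagonal]
  have hfH : tOne (Fin n) (hH.cfc f)
      = tOne (Fin n) U * Matrix.diagonal (fun P : (Fin n × Fin m) × Fin n =>
          (RCLike.ofReal ∘ f ∘ hH.eigenvalues) P.1) * tOne (Fin n) (star U) := by
    unfold Matrix.IsHermitian.cfc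
    simp only [Unitary.conjStarAlgAut_apply, Unitary.coe_star]
    rw [← hU, ← tOne_mul, ← tOne_mul, tOne_diagonal]
  set Y : Matrix ((Fin n × Fin m) × Fin n) (Fin m) ℂ := tOne (Fin n) (star U) * W * V with hY
  have hYH : Yᴴ = Vᴴ * Wᴴ * tOne (Fin n) U := by
    rw [hY]
    simp [Matrix.conjTranspose_mul, tOne_conjTranspose, Matrix.star_eq_conjTranspose,
      Matrix.conjTranspose_conjTranspose, Matrix.mul_assoc]
  have hYY : Yᴴ * Y = 1 := by
    rw [hYH, hY]
    calc Vᴴ * Wᴴ * tOne (Fin n) U * (tOne (Fin n) (star U) * W * V)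
        = Vᴴ * (Wᴴ * ((tOne (Fin n) U * tOne (Fin n) (star U)) * (W * V))) := by
          simp only [Matrix.mul_assoc]
      _ = 1 := by
          rw [tOne_mul, hUU, tOne_one, Matrix.one_mul, ← Matrix.mul_assoc Wᴴ W V, hWW,
            Matrix.one_mul, ← Matrix.star_eq_conjTranspose, hVV']
  have hdiag : Matrix.diagonal (RCLike.ofReal ∘ hK.eigenvalues)
      = Yᴴ * Matrix.diagonal (fun P : (Fin n × Fin m) × Fin n =>
          ((RCLike.ofReal ∘ hH.eigenvalues) P.1 : ℂ)) * Y := by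
    rw [← hs, hKW, hHspec, hYH, hY]
    simp only [Matrix.star_eq_conjTranspose, Matrix.mul_assoc]
  have hnorm : ∀ j : Fin m, ∑ P : (Fin n × Fin m) × Fin n, Complex.normSq (Y P j) = 1 := by
    intro j
    have h := congrArg (fun M : Matrix (Fin m) (Fin m) ℂ => M j j) hYY
    simp only [Matrix.mul_apply, Matrix.conjTranspose_apply, Matrix.one_apply_eq] at h
    have h2 : ∑ P : (Fin n × Fin m) × Fin n, (Complex.normSq (Y P j) : ℂ) = 1 := by
      rw [← h]
      refine Finset.sum_congr rfl fun P _ => ?_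
      rw [RCLike.star_def, mul_comm, Complex.mul_conj]
    exact_mod_cast h2
  have hmu : ∀ j : Fin m, hK.eigenvalues j
      = ∑ P : (Fin n × Fin m) × Fin n, Complex.normSq (Y P j) * hH.eigenvalues P.1 := by
    intro j
    have h : (RCLike.ofReal (hK.eigenvalues j) : ℂ)
        = ∑ P : (Fin n × Fin m) × Fin n,
            star (Y P j) * ((RCLike.ofReal ∘ hH.eigenvalues) P.1 : ℂ) * Y P j := by
      conv_lhs => rw [show (RCLike.ofReal (hK.eigenvalues j) : ℂ)
        = Matrix.diagonal (RCLike.ofReal ∘ hK.eigenvalues) j j by simp]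
      rw [hdiag, triple_diag_entry]
    simp only [Function.comp_apply] at h
    have h2 : ((hK.eigenvalues j : ℝ) : ℂ)
        = ((∑ P : (Fin n × Fin m) × Fin n, Complex.normSq (Y P j) * hH.eigenvalues P.1 : ℝ) : ℂ) := by
      rw [show ((hK.eigenvalues j : ℝ) : ℂ) = (RCLike.ofReal (hK.eigenvalues j) : ℂ) from rfl, h,
        Complex.ofReal_sum]
      refine Finset.sum_congr rfl fun P _ => ?_
      have hterm : star (Y P j) * (RCLike.ofReal (hH.eigenvalues P.1) : ℂ) * Y P j
          = (Y P j * (starRingEnd ℂ) (Y P j)) * (RCLike.ofReal (hH.eigenvalues P.1) : ℂ) := by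
        rw [RCLike.star_def]; ring
      rw [hterm, Complex.mul_conj]
      push_cast; rfl
    exact_mod_cast h2
  have hLHS : (matFun hK f).trace = ((∑ j, f (hK.eigenvalues j) : ℝ) : ℂ) := by
    show (hK.cfc f).trace = _
    unfold Matrix.IsHermitian.cfc
    simp only [Unitary.conjStarAlgAut_apply, Unitary.coe_star]
    rw [← hV, Matrix.trace_mul_cycle, hVV', Matrix.one_mul, Matrix.trace_diagonal]
    simp only [Function.comp_apply]
    rw [Complex.ofReal_sum]
    push_cast; rfl
  have hVVH : V * Vᴴ = 1 := by rw [← Matrix.star_eq_conjTranspose]; exact hVV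
  have hRHS : (aᴴ * ptrace2 (matFun hH f) * a).trace
      = ((∑ j, ∑ P : (Fin n × Fin m) × Fin n,
          Complex.normSq (Y P j) * f (hH.eigenvalues P.1) : ℝ) : ℂ) := by
    have step1 : (aᴴ * ptrace2 (matFun hH f) * a).trace
        = (Yᴴ * Matrix.diagonal (fun P : (Fin n × Fin m) × Fin n =>
            ((RCLike.ofReal ∘ f ∘ hH.eigenvalues) P.1 : ℂ)) * Y).trace := by
      rw [show (matFun hH f) = hH.cfc f from rfl, ← traceW (hH.cfc f), hfH]
      have hZ : Yᴴ * Matrix.diagonal (fun P : (Fin n × Fin m) × Fin n =>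
            ((RCLike.ofReal ∘ f ∘ hH.eigenvalues) P.1 : ℂ)) * Y
          = Vᴴ * (Wᴴ * (tOne (Fin n) U * Matrix.diagonal (fun P : (Fin n × Fin m) × Fin n =>
              (RCLike.ofReal ∘ f ∘ hH.eigenvalues) P.1) * tOne (Fin n) (star U)) * W) * V := by
        rw [hYH, hY]; simp only [Matrix.star_eq_conjTranspose, Matrix.mul_assoc]
      have cyc : (Vᴴ * (Wᴴ * (tOne (Fin n) U * Matrix.diagonal (fun P : (Fin n × Fin m) × Fin n =>
              (RCLike.ofReal ∘ f ∘ hH.eigenvalues) P.1) * tOne (Fin n) (star U)) * W) * V).trace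
          = (Wᴴ * (tOne (Fin n) U * Matrix.diagonal (fun P : (Fin n × Fin m) × Fin n =>
              (RCLike.ofReal ∘ f ∘ hH.eigenvalues) P.1) * tOne (Fin n) (star U)) * W).trace := by
        rw [Matrix.trace_mul_cycle, hVVH, Matrix.one_mul]
      rw [hZ]
      exact cyc.symm
    rw [step1]
    simp only [Matrix.trace, Matrix.diag]
    rw [Complex.ofReal_sum]
    refine Finset.sum_congr rfl fun j _ => ?_
    rw [triple_diag_entry, Complex.ofReal_sum]
    refine Finset.sum_congr rfl fun P _ => ?_
    have hterm : star (Y P j) * ((RCLike.ofReal ∘ f ∘ hH.eigenvalues) P.1 : ℂ) * Y P j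
        = (Y P j * (starRingEnd ℂ) (Y P j)) * (RCLike.ofReal (f (hH.eigenvalues P.1)) : ℂ) := by
      rw [RCLike.star_def]; simp only [Function.comp_apply]; ring
    rw [hterm, Complex.mul_conj]
    push_cast; rfl
  rw [hLHS, hRHS, Complex.real_le_real]
  refine Finset.sum_le_sum fun j _ => ?_
  have hj := hconv.map_sum_le (t := Finset.univ)
      (w := fun P : (Fin n × Fin m) × Fin n => Complex.normSq (Y P j))
      (p := fun P : (Fin n × Fin m) × Fin n => hH.eigenvalues P.1)
      (fun P _ => Complex.normSq_nonneg _) (hnorm j) (fun P _ => Set.mem_univ _)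
  rw [hmu j]
  simpa [smul_eq_mul] using hj
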